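/- There exist ε > 0 and C > 0 such that for every Δt ∈ [0, ε), with β(Δt) the unique solution in (0, σ_K/σ_S] of the monopoly quartic equation, λ(Δt) := β(Δt)σ_S²/(σ_K² + β(Δt)²σ_S²), φ(Δt) := 1 − λ(Δt)β(Δt)/(1 − λ(Δt)β(Δt)), and μ(Δt) := λ(Δt)φ(Δt), one has |φ(Δt) − (2γσ_K/σ_S)^{1/2}·√Δt| ≤ C·Δt and |μ(Δt) − (γσ_S/(2σ_K))^{1/2}·√Δt| ≤ C·Δt. -/

import Mathlib

private lemma no_two_roots (k γ ρ Δt x y : ℝ) (hk : 0 < k) (hγ : 0 < γ) (hΔt0 : 0 ≤ Δt)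
    (hρΔt : ρ * Δt ≤ 1/2) (hρΔt0 : 0 ≤ ρ * Δt)
    (hx0 : 0 < x) (hxk : x ≤ k) (hy0 : 0 < y) (hyk : y ≤ k) (hxy : x < y)
    (hEx : (k^2 - x^2)^2 + ρ*Δt*x^2*(k^2 - x^2) = γ*Δt*x*k^2*(x^2 + k^2))
    (hEy : (k^2 - y^2)^2 + ρ*Δt*y^2*(k^2 - y^2) = γ*Δt*y*k^2*(y^2 + k^2)) : False := by
  have hux : 0 < k^2 - x^2 := by nlinarith
  have huy : 0 ≤ k^2 - y^2 := by nlinarith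
  have huxy : k^2 - y^2 < k^2 - x^2 := by nlinarith
  have hEx' : (1 - ρ*Δt)*(k^2-x^2)^2 + ρ*Δt*k^2*(k^2-x^2) = γ*Δt*x*k^2*(x^2+k^2) := by
    linear_combination hEx
  have hEy' : (1 - ρ*Δt)*(k^2-y^2)^2 + ρ*Δt*k^2*(k^2-y^2) = γ*Δt*y*k^2*(y^2+k^2) := by
    linear_combination hEy
  have hrhs : γ*Δt*x*k^2*(x^2+k^2) ≤ γ*Δt*y*k^2*(y^2+k^2) := by
    have h1 : x*(x^2+k^2) ≤ y*(y^2+k^2) := by nlinarith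
    have h2 : 0 ≤ γ*Δt*k^2 := by positivity
    nlinarith
  have hsq : (k^2-y^2)^2 < (k^2-x^2)^2 := by nlinarith
  have p1 : 0 ≤ (1 - ρ*Δt - 1/2) * ((k^2-x^2)^2 - (k^2-y^2)^2) :=
    mul_nonneg (by linarith) (by linarith)
  have p2 : 0 ≤ ρ*Δt*k^2*((k^2-x^2) - (k^2-y^2)) :=
    mul_nonneg (by positivity) (by linarith)
  linarith [hEx', hEy', hrhs, p1, p2, hsq]

set_option maxHeartbeats 1000000 in
theorem stmt3 (σS σK γ ρ : ℝ) (hσS : 0 < σS) (hσK : 0 < σK) (hγ : 0 < γ) (hρ : 0 < ρ) :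
    ∃ ε > 0, ∃ C > 0, ∀ Δt : ℝ, 0 ≤ Δt → Δt < ε →
      ∃ β lam φ μ : ℝ,
        (β ∈ Set.Ioc 0 (σK / σS) ∧
          0 = (1 - ρ * Δt) * β ^ 4
                - (2 - ρ * Δt + β * γ * Δt) * (σK / σS) ^ 2 * β ^ 2
                + (σK / σS) ^ 4 * (1 - β * γ * Δt)) ∧
        (∀ b : ℝ, b ∈ Set.Ioc 0 (σK / σS) →
          0 = (1 - ρ * Δt) * b ^ 4
                - (2 - ρ * Δt + b * γ * Δt) * (σK / σS) ^ 2 * b ^ 2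
                + (σK / σS) ^ 4 * (1 - b * γ * Δt) → b = β) ∧
        lam = β * σS ^ 2 / (σK ^ 2 + β ^ 2 * σS ^ 2) ∧
        φ = 1 - lam * β / (1 - lam * β) ∧
        μ = lam * φ ∧
        |φ - Real.sqrt (2 * γ * σK / σS) * Real.sqrt Δt| ≤ C * Δt ∧
        |μ - Real.sqrt (γ * σS / (2 * σK)) * Real.sqrt Δt| ≤ C * Δt := by
  set k := σK / σS with hkdef
  have hk : 0 < k := div_pos hσK hσS
  have hkσ : k * σS = σK := div_mul_cancel₀ _ hσS.ne'
  obtain ⟨C1, hC1def⟩ : ∃ c : ℝ, c = ρ + 3*γ*k := ⟨_, rfl⟩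
  obtain ⟨C2, hC2def⟩ : ∃ c : ℝ, c = (ρ + 4*γ*k)/(2*k) := ⟨_, rfl⟩
  have hC10 : 0 ≤ C1 := by rw [hC1def]; positivity
  have hC20 : 0 ≤ C2 := by rw [hC2def]; positivity
  refine ⟨min (min (1/(2*ρ)) (1/(8*γ*k))) 1, by positivity,
    C1 + C2 + 1, by linarith only [hC10, hC20], ?_⟩
  intro Δt hΔt0 hΔtε
  have hρΔt : ρ * Δt ≤ 1/2 := by
    have h1 : Δt < 1/(2*ρ) := lt_of_lt_of_le hΔtε (le_trans (min_le_left _ _) (min_le_left _ _))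
    rw [lt_div_iff₀ (by positivity)] at h1
    linarith only [h1]
  have h2γk : 2*γ*k*Δt ≤ 1/4 := by
    have h1 : Δt < 1/(8*γ*k) := lt_of_lt_of_le hΔtε (le_trans (min_le_left _ _) (min_le_right _ _))
    rw [lt_div_iff₀ (by positivity)] at h1
    linarith only [h1]
  have hρΔt0 : 0 ≤ ρ * Δt := by positivity
  -- existence of the root via IVT
  have hcont : ContinuousOn (fun b : ℝ => (1 - ρ * Δt) * b ^ 4
                - (2 - ρ * Δt + b * γ * Δt) * k ^ 2 * b ^ 2
                + k ^ 4 * (1 - b * γ * Δt)) (Set.Icc 0 k) := by fun_prop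
  have h0mem : (0:ℝ) ∈ Set.Icc ((1 - ρ * Δt) * k ^ 4
                - (2 - ρ * Δt + k * γ * Δt) * k ^ 2 * k ^ 2
                + k ^ 4 * (1 - k * γ * Δt))
      ((1 - ρ * Δt) * (0:ℝ) ^ 4 - (2 - ρ * Δt + 0 * γ * Δt) * k ^ 2 * (0:ℝ) ^ 2
                + k ^ 4 * (1 - 0 * γ * Δt)) := by
    constructor
    · linarith only [mul_nonneg (mul_nonneg hγ.le hΔt0) (pow_pos hk 5).le]
    · norm_num
      positivity
  obtain ⟨β, hβmem, hβroot0⟩ := intermediate_value_Icc' hk.le hcont h0mem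
  have hβroot : (1 - ρ * Δt) * β ^ 4 - (2 - ρ * Δt + β * γ * Δt) * k ^ 2 * β ^ 2
                + k ^ 4 * (1 - β * γ * Δt) = 0 := hβroot0
  have hβne : β ≠ 0 := by
    rintro rfl
    linarith only [hβroot, pow_pos hk 4]
  have hβ0 : 0 < β := hβmem.1.lt_of_ne (Ne.symm hβne)
  have hβk : β ≤ k := hβmem.2
  -- key identity
  have hE : (k^2 - β^2)^2 + ρ*Δt*β^2*(k^2 - β^2) = γ*Δt*β*k^2*(β^2 + k^2) := by
    linear_combination hβroot
  -- quantitative bounds on u := k² - β²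
  set t := Real.sqrt (2*γ*k*Δt) with htdef
  have ht0 : 0 ≤ t := Real.sqrt_nonneg _
  have ht2 : t^2 = 2*γ*k*Δt := Real.sq_sqrt (by positivity)
  have hthalf : t ≤ 1/2 := by nlinarith only [ht2, h2γk, ht0]
  have hu0 : 0 ≤ k^2 - β^2 := by
    linarith only [mul_nonneg (sub_nonneg.2 hβk) (add_pos hk hβ0).le]
  have P1 : 0 ≤ ρ*Δt*((k^2-β^2)*(k^2-β^2)) := by positivity
  have PA : 0 ≤ ρ*Δt*(β^2*(k^2-β^2)) := by positivity
  have PB : 0 ≤ γ*Δt*k^2*((k-β)*(β^2+k^2)) := by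
    have h1 : 0 ≤ k - β := by linarith only [hβk]
    positivity
  have PC : 0 ≤ γ*Δt*k^3*(k^2-β^2) := by positivity
  have husq : (k^2-β^2)^2 ≤ 2*γ*k^5*Δt := by linarith only [hE, PA, PB, PC]
  have hktsq : (k^2*t)^2 = 2*γ*k^5*Δt := by rw [mul_pow, ht2]; ring
  have hule : k^2 - β^2 ≤ k^2 * t :=
    (pow_le_pow_iff_left₀ hu0 (by positivity : (0:ℝ) ≤ k^2*t) two_ne_zero).mp
      (by rw [hktsq]; exact husq)
  have P2 : 0 ≤ γ*Δt*k^2*((k-β)*(k^2+2*k*β-β^2)) := by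
    have h1 : 0 ≤ k - β := by linarith only [hβk]
    have h2 : 0 ≤ k^2+2*k*β-β^2 := by linarith only [hu0, (mul_pos hk hβ0).le]
    have h3 : 0 ≤ γ*Δt*k^2 := by positivity
    exact mul_nonneg h3 (mul_nonneg h1 h2)
  have hT4 : k^4*t^2 = 2*γ*k^5*Δt := by rw [ht2]; ring
  have hTu : (3:ℝ)/2*k^2*t^2*(k^2-β^2) = 3*γ*k^3*Δt*(k^2-β^2) := by rw [ht2]; ring
  have hq : k^4*t^2 ≤ (k^2-β^2)^2 + ρ*Δt*k^2*(k^2-β^2) + (3:ℝ)/2*k^2*t^2*(k^2-β^2) := by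
    linarith only [hE, P1, P2, hT4, hTu]
  have hlow : k^2*t - ρ*Δt*k^2 - (3:ℝ)/2*k^2*t^2 ≤ k^2 - β^2 := by
    rcases eq_or_lt_of_le ht0 with h | h
    · have h2 : 0 ≤ ρ*Δt*k^2 := by positivity
      rw [← h]; linarith only [hu0, h2]
    · have hkt : 0 < k^2 * t := by positivity
      have q1 := mul_le_mul_of_nonneg_left hule hu0
      have q2 := mul_le_mul_of_nonneg_left hule (by positivity : (0:ℝ) ≤ ρ*Δt*k^2)
      have q3 := mul_le_mul_of_nonneg_left hule (by positivity : (0:ℝ) ≤ (3:ℝ)/2*k^2*t^2)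
      have h1 : (k^2*t) * (k^2*t) ≤ (k^2*t) * ((k^2-β^2) + ρ*Δt*k^2 + (3:ℝ)/2*k^2*t^2) := by
        linarith only [hq, q1, q2, q3]
      have h5 := le_of_mul_le_mul_left h1 hkt
      linarith only [h5]
  -- lambda and phi
  set lam := β * σS ^ 2 / (σK ^ 2 + β ^ 2 * σS ^ 2) with hlamdef
  have hden : (0:ℝ) < σK ^ 2 + β ^ 2 * σS ^ 2 := by positivity
  have hden2 : (0:ℝ) < k^2 + β^2 := by positivity
  have hlam2 : lam = β / (k^2 + β^2) := by
    rw [hlamdef, div_eq_div_iff hden.ne' hden2.ne']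
    linear_combination (β*(k*σS+σK))*hkσ
  have hφ : 1 - lam * β / (1 - lam * β) = (k^2 - β^2)/k^2 := by
    have hlamβ : 1 - lam * β = k^2/(k^2+β^2) := by
      rw [hlam2]; field_simp; ring
    rw [hlamβ, hlam2]
    field_simp
  -- v bounds
  set v := (k^2 - β^2)/k^2 with hvdef
  have hv0 : 0 ≤ v := by positivity
  have hvt : v ≤ t := by
    rw [hvdef, div_le_iff₀ (by positivity : (0:ℝ) < k^2)]
    linarith only [hule]
  have hvlow : t - C1*Δt ≤ v := by
    rw [hvdef, le_div_iff₀ (by positivity : (0:ℝ) < k^2)]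
    have expand : (t - C1*Δt)*k^2 = k^2*t - ρ*Δt*k^2 - 3*γ*k^3*Δt := by
      rw [hC1def]; ring
    rw [expand]
    have hT3 : (3:ℝ)/2*k^2*t^2 = 3*γ*k^3*Δt := by rw [ht2]; ring
    linarith only [hlow, hT3]
  -- lam bounds
  have hL1 : lam*(2*k) ≤ 1 := by
    rw [hlam2, div_mul_eq_mul_div, div_le_one hden2]
    linarith only [sq_nonneg (k-β)]
  have hkb : (k-β)^2*k^2 ≤ 2*γ*k^3*Δt*k^2 := by
    have h1 : (k-β)*k ≤ k^2-β^2 := by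
      linarith only [mul_nonneg hβ0.le (sub_nonneg.2 hβk)]
    have h1' : 0 ≤ (k-β)*k := mul_nonneg (by linarith only [hβk]) hk.le
    have h2 : ((k-β)*k)^2 ≤ (k^2-β^2)^2 := pow_le_pow_left₀ h1' h1 2
    calc (k-β)^2*k^2 = ((k-β)*k)^2 := by ring
      _ ≤ (k^2-β^2)^2 := h2
      _ ≤ 2*γ*k^5*Δt := husq
      _ = 2*γ*k^3*Δt*k^2 := by ring
  have hkb' : (k-β)^2 ≤ 2*γ*k^3*Δt :=
    le_of_mul_le_mul_right (by linarith only [hkb]) (by positivity : (0:ℝ) < k^2)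
  have hL0 : 1 - 2*k*γ*Δt ≤ lam*(2*k) := by
    rw [hlam2, div_mul_eq_mul_div, le_div_iff₀ hden2]
    have hpos : 0 ≤ 2*k*γ*Δt*β^2 := by positivity
    linarith only [hkb', hpos]
  -- sqrt identities
  have hs1 : Real.sqrt (2 * γ * σK / σS) * Real.sqrt Δt = t := by
    rw [htdef, ← Real.sqrt_mul (by positivity) Δt]
    congr 1
    rw [hkdef]; ring
  have hs2 : Real.sqrt (γ * σS / (2 * σK)) * Real.sqrt Δt = t / (2*k) := by
    have key : (γ * σS / (2 * σK)) * Δt = (t/(2*k))^2 := by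
      rw [div_pow, ht2, hkdef]
      field_simp
    rw [← Real.sqrt_mul (by positivity) Δt, key, Real.sqrt_sq (by positivity)]
  -- assemble
  refine ⟨β, lam, 1 - lam * β / (1 - lam * β), lam * (1 - lam * β / (1 - lam * β)),
    ⟨⟨hβ0, hβk⟩, by linarith only [hβroot]⟩, ?_, rfl, rfl, rfl, ?_, ?_⟩
  · -- uniqueness
    intro b hb hbeq
    have hEb : (k^2 - b^2)^2 + ρ*Δt*b^2*(k^2 - b^2) = γ*Δt*b*k^2*(b^2 + k^2) := by
      linear_combination -hbeq
    rcases lt_trichotomy b β with h | h | h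
    · exact absurd (no_two_roots k γ ρ Δt b β hk hγ hΔt0 hρΔt hρΔt0 hb.1 hb.2 hβ0 hβk h hEb hE) id
    · exact h
    · exact absurd (no_two_roots k γ ρ Δt β b hk hγ hΔt0 hρΔt hρΔt0 hβ0 hβk hb.1 hb.2 h hE hEb) id
  · -- phi bound
    rw [hφ, hs1, abs_le]
    have hCΔ : 0 ≤ (C2+1)*Δt := mul_nonneg (by linarith only [hC20]) hΔt0
    have hC1Δ : 0 ≤ C1*Δt := mul_nonneg hC10 hΔt0
    constructor
    · linarith only [hvlow, hCΔ]
    · linarith only [hvt, hC1Δ, hCΔ]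
  · -- mu bound
    rw [hφ, hs2, abs_le]
    have h2k0 : (0:ℝ) < 2*k := by positivity
    have hupper : lam * v ≤ t/(2*k) := by
      rw [le_div_iff₀ h2k0]
      have e1 : lam*v*(2*k) = (lam*(2*k))*v := by ring
      rw [e1]
      linarith only [mul_le_mul_of_nonneg_right hL1 hv0, hvt]
    have hlower : t/(2*k) - C2*Δt ≤ lam * v := by
      rw [sub_le_iff_le_add, div_le_iff₀ h2k0]
      have r1 : (1 - lam*(2*k))*v ≤ (2*k*γ*Δt)*(1/2) :=
        mul_le_mul (by linarith only [hL0]) (by linarith only [hvt, hthalf]) hv0 (by positivity)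
      have hC2kΔ : C2*Δt*(2*k) = (ρ + 4*γ*k)*Δt := by
        rw [hC2def]; field_simp
      have hC1Δeq : C1*Δt = (ρ + 3*γ*k)*Δt := by rw [hC1def]
      linarith only [r1, hvlow, hC2kΔ, hC1Δeq]
    have hC1Δ : 0 ≤ C1*Δt := mul_nonneg hC10 hΔt0
    have hC2Δ : 0 ≤ C2*Δt := mul_nonneg hC20 hΔt0
    constructor
    · linarith only [hlower, hC1Δ, hΔt0]
    · linarith only [hupper, hC1Δ, hC2Δ, hΔt0]
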